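/- In dimension four (m=1), the Robinson 3-form associated to an optical 1-form κ is the Hodge dual of κ: if ρ_{abc} = 3κ_{[a}ω_{bc]} where ω induces the Hermitian structure on the 2-dimensional screen space, then ρ = ⋆κ up to sign, for an oriented Lorentzian 4-space. -/

import Mathlib

/-- The Robinson 3-form `ρ_{abc} = 3 κ_{[a} ω_{bc]}` associated to the optical
1-form `κ = g(k,·)` and the 2-form `ω`. -/
def Rob3 {V : Type*} [AddCommGroup V] [Module ℝ V]
    (g ω : V →ₗ[ℝ] V →ₗ[ℝ] ℝ) (k : V) (x y z : V) : ℝ :=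
  g k x * ω y z - g k y * ω x z + g k z * ω x y

set_option maxHeartbeats 2000000 in
/-- In dimension four, the Robinson 3-form associated to an
optical 1-form `κ` is, up to sign, the Hodge dual of `κ`: if
`ρ_{abc} = 3 κ_{[a} ω_{bc]}` where `ω` induces the Hermitian structure on the
2-dimensional screen space, then `ρ = ± ⋆κ` for an oriented Lorentzian
4-space; here `(⋆κ)(x,y,z) = ε(k,x,y,z)` with `ε` the volume form normalised
on a pseudo-orthonormal oriented basis. -/
theorem robinson_three_form_is_hodge_dual (V : Type*) [AddCommGroup V] [Module ℝ V]
    [FiniteDimensional ℝ V]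
    (g : V →ₗ[ℝ] V →ₗ[ℝ] ℝ)
    (e : Module.Basis (Fin 4) ℝ V)
    (hGe : ∀ i j, g (e i) (e j) =
      if i = j then (if (i : ℕ) = 3 then (-1 : ℝ) else 1) else 0)
    (ε : AlternatingMap ℝ V ℝ (Fin 4))
    (hε : ε ![e 0, e 1, e 2, e 3] = 1)
    (k : V) (hk : k ≠ 0) (hkk : g k k = 0)
    (l : V) (hkl : g k l = 1) (hll : g l l = 0)
    (ω : V →ₗ[ℝ] V →ₗ[ℝ] ℝ)
    (hωalt : ∀ v w, ω v w = - ω w v)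
    (hωk : ∀ v, ω k v = 0) (hωl : ∀ v, ω l v = 0)
    (hHerm : ∀ v w u, (∀ x, g u x = ω v x) →
      ω u w = -(g v w - g k v * g l w - g l v * g k w)) :
    (∀ x y z, Rob3 g ω k x y z = ε ![k, x, y, z]) ∨
    (∀ x y z, Rob3 g ω k x y z = -ε ![k, x, y, z]) := by
  classical
  -- symmetry of g
  have gsymm : ∀ v w : V, g v w = g w v := by
    have hg : g = g.flip := by
      apply e.ext; intro i; apply e.ext; intro j
      simp only [LinearMap.flip_apply, hGe]
      by_cases h : i = j
      · subst h; rfl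
      · rw [if_neg h, if_neg (fun h' => h h'.symm)]
    intro v w; conv_lhs => rw [hg]
    exact LinearMap.flip_apply g w v
  have hlk : g l k = 1 := by rw [gsymm]; exact hkl
  -- existence of a non-null screen vector
  obtain ⟨s, hks, hls, hss⟩ : ∃ s, g k s = 0 ∧ g l s = 0 ∧ g s s ≠ 0 := by
    by_contra hcon
    push_neg at hcon
    have key : ∀ v : V, g v v = 2 * (g k v * g l v) := by
      intro v
      have h1 : g k (v - g l v • k - g k v • l) = 0 := by
        simp [map_sub, map_smul, hkk, hkl]
      have h2 : g l (v - g l v • k - g k v • l) = 0 := by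
        simp [map_sub, map_smul, hlk, hll]
      have h3 := hcon _ h1 h2
      have hvk : g v k = g k v := gsymm v k
      have hvl : g v l = g l v := gsymm v l
      simp only [map_sub, map_smul, LinearMap.sub_apply, LinearMap.smul_apply,
        smul_eq_mul] at h3
      rw [hkk, hll, hkl, hlk, hvk, hvl] at h3
      nlinarith [h3]
    have kv : ∀ i j : Fin 4, i ≠ j → (i:ℕ) < 3 → (j:ℕ) < 3 →
        g k (e i) * g l (e j) + g k (e j) * g l (e i) = 0 := by
      intro i j hij hi hj
      have gii : g (e i) (e i) = 1 := by
        rw [hGe, if_pos rfl, if_neg (by omega : ¬ (i:ℕ) = 3)]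
      have gjj : g (e j) (e j) = 1 := by
        rw [hGe, if_pos rfl, if_neg (by omega : ¬ (j:ℕ) = 3)]
      have gij : g (e i) (e j) = 0 := by rw [hGe, if_neg hij]
      have gji : g (e j) (e i) = 0 := by
        rw [hGe, if_neg (fun h => hij h.symm)]
      have h1 := key (e i)
      have h2 := key (e j)
      have h3 := key (e i + e j)
      rw [gii] at h1
      rw [gjj] at h2
      simp only [map_add, LinearMap.add_apply] at h3
      rw [gii, gij, gji, gjj] at h3
      linear_combination h1/2 + h2/2 - h3/2
    have d0 : g k (e 0) * g l (e 0) = 1/2 := by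
      have := key (e 0); rw [hGe] at this; norm_num at this; linarith
    have d1 : g k (e 1) * g l (e 1) = 1/2 := by
      have := key (e 1); rw [hGe] at this; norm_num at this; linarith
    have d2 : g k (e 2) * g l (e 2) = 1/2 := by
      have := key (e 2); rw [hGe] at this; norm_num at this; linarith
    have c01 := kv 0 1 (by decide) (by norm_num) (by norm_num)
    have c02 := kv 0 2 (by decide) (by norm_num) (by norm_num)
    have c12 := kv 1 2 (by decide) (by norm_num) (by norm_num)
    set a0 := g k (e 0); set a1 := g k (e 1); set a2 := g k (e 2)
    set b0 := g l (e 0); set b1 := g l (e 1); set b2 := g l (e 2)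
    have h1 : (a0*b1)*(a1*b2) = (a1*b0)*(a2*b1) := by
      rw [show a0*b1 = -(a1*b0) by linarith, show a1*b2 = -(a2*b1) by linarith]; ring
    have h2 : (a1*b1)*(a0*b2) = (a1*b1)*(a2*b0) := by linear_combination h1
    have h3 : a0*b2 = a2*b0 := by
      have hq : a1*b1 ≠ 0 := by rw [d1]; norm_num
      exact mul_left_cancel₀ hq h2
    have h4 : a0*b2 = 0 := by linarith
    have h5 : a2*b0 = 0 := by linarith
    have h6 : (a0*b0)*(a2*b2) = (a0*b2)*(a2*b0) := by ring
    rw [d0, d2, h4, h5] at h6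
    norm_num at h6
  set c := g s s with hc
  -- the rotated screen vector u (= J s)
  set η : Fin 4 → ℝ := fun j => if (j:ℕ) = 3 then -1 else 1 with hη
  set u : V := ∑ i : Fin 4, (η i * ω s (e i)) • e i with hu
  have hgu : ∀ x, g u x = ω s x := by
    have : g u = ω s := by
      apply e.ext; intro j
      rw [hu, map_sum, LinearMap.sum_apply]
      have : ∀ i : Fin 4,
          g ((η i * ω s (e i)) • e i) (e j) = if i = j then η j * ω s (e j) * η j else 0 := by
        intro i
        rw [map_smul, LinearMap.smul_apply, smul_eq_mul, hGe]
        by_cases h : i = j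
        · subst h; simp [hη]
        · simp [h]
      rw [Finset.sum_congr rfl fun i _ => this i, Finset.sum_ite_eq' Finset.univ j]
      simp only [Finset.mem_univ, if_pos]
      have : η j * η j = 1 := by by_cases h : (j:ℕ) = 3 <;> simp [hη, h]
      linear_combination (ω s (e j)) * this
    intro x; rw [this]
  have hωu : ∀ x, ω u x = -(g s x) := by
    intro x
    have := hHerm s x u hgu
    rw [hks, hls] at this
    rw [this]; ring
  -- value tables
  have ωsk : ω s k = 0 := by rw [hωalt, hωk]; ring
  have ωsl : ω s l = 0 := by rw [hωalt, hωl]; ring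
  have ωss : ω s s = 0 := by have := hωalt s s; linarith
  have ωsu : ω s u = c := by
    rw [hωalt, hωu]; rw [← hc]; ring
  have ωus : ω u s = -c := by rw [hωu, hc]
  have ωuu : ω u u = 0 := by have := hωalt u u; linarith
  have ωul : ω u l = 0 := by rw [hωalt, hωl]; ring
  have ωuk : ω u k = 0 := by rw [hωalt, hωk]; ring
  have guk : g u k = 0 := by rw [hgu, ωsk]
  have gul : g u l = 0 := by rw [hgu, ωsl]
  have gus : g u s = 0 := by rw [hgu, ωss]
  have guu : g u u = c := by rw [hgu, ωsu]
  have gku : g k u = 0 := by rw [gsymm, guk]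
  have glu : g l u = 0 := by rw [gsymm, gul]
  have gsu : g s u = 0 := by rw [gsymm, gus]
  have gsk : g s k = 0 := by rw [gsymm, hks]
  have gsl : g s l = 0 := by rw [gsymm, hls]
  -- linear independence of (k,l,s,u)
  have li : LinearIndependent ℝ ![k, l, s, u] := by
    rw [Fintype.linearIndependent_iff]
    intro t ht
    rw [Fin.sum_univ_four] at ht
    simp only [Matrix.cons_val_zero, Matrix.cons_val_one, Matrix.head_cons,
      Matrix.cons_val_two, Matrix.tail_cons, Matrix.cons_val_three] at ht
    have e0 : g l (t 0 • k + t 1 • l + t 2 • s + t 3 • u) = t 0 := by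
      simp [map_add, map_smul, hlk, hll, hls, glu]
    have e1 : g k (t 0 • k + t 1 • l + t 2 • s + t 3 • u) = t 1 := by
      simp [map_add, map_smul, hkk, hkl, hks, gku]
    have e2 : g s (t 0 • k + t 1 • l + t 2 • s + t 3 • u) = t 2 * c := by
      simp [map_add, map_smul, gsk, gsl, gsu, mul_comm, hc.symm]
    have e3 : g u (t 0 • k + t 1 • l + t 2 • s + t 3 • u) = t 3 * c := by
      simp [map_add, map_smul, guk, gul, gus, guu, mul_comm]
    rw [ht] at e0 e1 e2 e3
    simp only [map_zero] at e0 e1 e2 e3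
    have ht2 : t 2 = 0 := by
      rcases mul_eq_zero.mp e2.symm with h | h
      · exact h
      · exact absurd h hss
    have ht3 : t 3 = 0 := by
      rcases mul_eq_zero.mp e3.symm with h | h
      · exact h
      · exact absurd h hss
    intro i; fin_cases i
    · exact e0.symm
    · exact e1.symm
    · exact ht2
    · exact ht3
  have hfr : Module.finrank ℝ V = 4 := by rw [Module.finrank_eq_card_basis e]; simp
  let b' : Module.Basis (Fin 4) ℝ V := basisOfLinearIndependentOfCardEqFinrank li (by simp [hfr])
  have hb' : ⇑b' = ![k, l, s, u] := coe_basisOfLinearIndependentOfCardEqFinrank li _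
  set w : Fin 4 → V := ![k, l, s, u] with hw
  have hεe : ε = e.det := by
    have h1 := ε.eq_smul_basis_det e
    have h2 : ε ⇑e = 1 := by
      have he4 : ⇑e = ![e 0, e 1, e 2, e 3] := by
        funext i; fin_cases i <;> rfl
      rw [he4, hε]
    rw [h2, one_smul] at h1
    exact h1
  set T := e.toMatrix w with hT
  set d := T.det with hd
  -- coordinates of g against the basis e
  have grepr : ∀ (v : V) (j : Fin 4), g v (e j) = η j * e.repr v j := by
    intro v j
    conv_lhs => rw [← e.sum_repr v]
    rw [map_sum, LinearMap.sum_apply]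
    have hterm : ∀ i : Fin 4,
        g (e.repr v i • e i) (e j) = if i = j then η j * e.repr v j else 0 := by
      intro i; rw [map_smul, LinearMap.smul_apply, smul_eq_mul, hGe]
      by_cases h : i = j
      · subst h; simp [hη, mul_comm]
      · simp [h]
    rw [Finset.sum_congr rfl fun i _ => hterm i, Finset.sum_ite_eq' Finset.univ j]
    simp
  -- the auxiliary alternating 4-form Φ
  set L : V →ₗ[ℝ] (Fin 4 → ℝ) := LinearMap.pi (fun i => g (w i)) with hL
  set Φ : AlternatingMap ℝ V ℝ (Fin 4) := Matrix.detRowAlternating.compLinearMap L with hΦdef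
  have hΦ := Φ.eq_smul_basis_det e
  have hΦapp : ∀ v : Fin 4 → V, Φ v = Matrix.det (Matrix.of fun j i => g (w i) (v j)) := by
    intro v
    rw [hΦdef, AlternatingMap.compLinearMap_apply]
    congr 1
  have hΦw : Φ w = -(c^2) := by
    have h1 := hΦapp w
    have hM : (Matrix.of fun j i => g (w i) (w j)) =
        !![0,1,0,0; 1,0,0,0; 0,0,c,0; 0,0,0,c] := by
      ext j i
      fin_cases j <;> fin_cases i <;>
        simp [hw, hkk, hkl, hlk, hll, hks, hls, gsk, gsl, gku, glu, guk, gul,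
          gsu, gus, guu, hc.symm, Matrix.vecHead, Matrix.vecTail]
    rw [h1, hM]
    simp [Matrix.det_succ_row_zero, Fin.sum_univ_succ, Fin.succAbove]
    ring
  have hΦe : Φ ⇑e = -d := by
    have h1 := hΦapp ⇑e
    have hS : (Matrix.of fun j i => g (w i) (e j)) = Matrix.diagonal η * T := by
      ext j i
      rw [Matrix.diagonal_mul, hT, Module.Basis.toMatrix_apply, Matrix.of_apply]
      exact grepr (w i) j
    rw [h1, hS, Matrix.det_mul, Matrix.det_diagonal, Fin.prod_univ_four]
    simp [hη, show ((0:Fin 4):ℕ) = 0 from rfl, show ((1:Fin 4):ℕ) = 1 from rfl,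
      show ((2:Fin 4):ℕ) = 2 from rfl, show ((3:Fin 4):ℕ) = 3 from rfl, hd]
  have hd2 : d^2 = c^2 := by
    have h2 : Φ w = Φ ⇑e * e.det w := by
      conv_lhs => rw [hΦ]
      rw [AlternatingMap.smul_apply, smul_eq_mul]
    rw [hΦw, hΦe, Module.Basis.det_apply, ← hT, ← hd] at h2
    linear_combination h2
  have hdc : d = c ∨ d = -c := by
    have h : (d - c) * (d + c) = 0 := by linear_combination hd2
    rcases mul_eq_zero.mp h with h | h
    · left; linarith
    · right; linarith
  have hb0 : b' 0 = k := by rw [hb']; rfl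
  have hb1 : b' 1 = l := by rw [hb']; rfl
  have hb2 : b' 2 = s := by rw [hb']; rfl
  have hb3 : b' 3 = u := by rw [hb']; rfl
  have hεb : ε = d • b'.det := by
    have h1 := ε.eq_smul_basis_det b'
    have h2 : ε ⇑b' = d := by
      rw [hb', hεe, Module.Basis.det_apply, ← hT]
    rw [h2] at h1
    exact h1
  have hrk : ∀ i, b'.repr k i = if i = 0 then 1 else 0 := by
    intro i
    rw [← hb0, b'.repr_self, Finsupp.single_apply]
    by_cases h : i = 0
    · subst h; simp
    · rw [if_neg (fun h' => h h'.symm), if_neg h]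
  have main : ∀ x y z : V, c * ε ![k, x, y, z] = d * Rob3 g ω k x y z := by
    intro x y z
    set px := b'.repr x with hpx
    set py := b'.repr y with hpy
    set pz := b'.repr z with hpz
    have hx := b'.sum_repr x
    have hy := b'.sum_repr y
    have hz := b'.sum_repr z
    rw [Fin.sum_univ_four] at hx hy hz
    rw [hb0, hb1, hb2, hb3] at hx hy hz
    rw [← hpx] at hx
    rw [← hpy] at hy
    rw [← hpz] at hz
    have hMx : b'.toMatrix ![k, x, y, z] =
        !![1, px 0, py 0, pz 0; 0, px 1, py 1, pz 1;
           0, px 2, py 2, pz 2; 0, px 3, py 3, pz 3] := by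
      ext i j
      fin_cases i <;> fin_cases j <;>
        simp [Module.Basis.toMatrix_apply, hrk, Matrix.vecHead, Matrix.vecTail,
          hpx, hpy, hpz]
    rw [hεb, AlternatingMap.smul_apply, smul_eq_mul, Module.Basis.det_apply, hMx]
    rw [show Rob3 g ω k x y z = g k x * ω y z - g k y * ω x z + g k z * ω x y from rfl]
    rw [← hx, ← hy, ← hz]
    simp only [map_add, map_smul, LinearMap.add_apply, LinearMap.smul_apply, smul_eq_mul,
      hkk, hkl, hks, gku, hωk, hωl, ωsk, ωsl, ωss, ωsu, ωuk, ωul, ωus, ωuu,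
      Matrix.det_succ_row_zero, Fin.sum_univ_succ, Fin.succAbove]
    simp [Matrix.vecHead, Matrix.vecTail, show ((2:Fin 3).succAbove 1) = 1 from rfl]
    ring
  rcases hdc with h | h
  · left
    intro x y z
    have hm := main x y z
    rw [h] at hm
    exact (mul_left_cancel₀ hss hm).symm
  · right
    intro x y z
    have hm := main x y z
    rw [h] at hm
    have h2 : c * ε ![k, x, y, z] = c * (-(Rob3 g ω k x y z)) := by linarith
    have h3 := mul_left_cancel₀ hss h2
    linarith
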